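/- Let X be an ergodic stationary process such that for some a ∈ ℝ, P(sup_{t∈[0,1]} X(t) = x) = 0 for all x > a, and P(X(0) > a) > 0. Then sup_{x∈ℝ} P(sup_{t∈[0,T]} X(t) = x) → 0 as T → ∞ (Assumption A holds). -/

import Mathlib

open MeasureTheory Filter Set Topology

lemma usc_bddAbove {f : ℝ → ℝ} (hf : UpperSemicontinuous f) {K : Set ℝ}
    (hK : IsCompact K) : BddAbove (f '' K) := by
  rcases K.eq_empty_or_nonempty with h | hne
  · simp [h]
  obtain ⟨t, htU, hcov⟩ := hK.elim_nhds_subcover (fun x => {y | f y < f x + 1})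
    (fun x _ => hf x (f x + 1) (by linarith))
  have hte : t.Nonempty := by
    obtain ⟨z, hz⟩ := hne
    obtain ⟨x, hx, -⟩ := Set.mem_iUnion₂.1 (hcov hz)
    exact ⟨x, hx⟩
  refine ⟨t.sup' hte (fun x => f x + 1), ?_⟩
  rintro y ⟨z, hz, rfl⟩
  obtain ⟨x, hx, hzx⟩ := Set.mem_iUnion₂.1 (hcov hz)
  exact le_trans (le_of_lt hzx) (Finset.le_sup' (fun x => f x + 1) hx)

lemma symmDiff_measure_zero {Ω : Type*} [MeasurableSpace Ω] (P : Measure Ω)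
    [IsProbabilityMeasure P] {s t : Set Ω} (hst : s ⊆ t) (hs : MeasurableSet s)
    (h : P s = P t) : P (symmDiff s t) = 0 := by
  rw [symmDiff_of_le hst, measure_diff hst hs.nullMeasurableSet (measure_ne_top P s), h,
    tsub_self]

theorem stmt13 {Ω : Type*} [MeasurableSpace Ω] (P : Measure Ω) [IsProbabilityMeasure P]
    (φ : ℝ → Ω → Ω) (X : ℝ → Ω → ℝ)
    (hφ0 : φ 0 = id) (hflow : ∀ s t, φ (s + t) = φ s ∘ φ t)
    (hmp : ∀ t, MeasurePreserving (φ t) P P)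
    (hX : ∀ t ω, X t ω = X 0 (φ t ω))
    (hX0 : Measurable (X 0))
    -- upper semicontinuous sample paths
    (husc : ∀ ω, UpperSemicontinuous (fun t => X t ω))
    -- the suprema over compact intervals are measurable
    (hmeas_sup : ∀ a b : ℝ, Measurable fun ω => ⨆ t : Set.Icc a b, X t.1 ω)
    -- ergodicity: a.e.-invariant sets are trivial
    (herg : ∀ A : Set Ω, MeasurableSet A → (∀ t, P (symmDiff (φ t ⁻¹' A) A) = 0) →
      P A = 0 ∨ P A = 1)
    (a : ℝ)
    (hatom : ∀ x > a, P {ω | (⨆ t : Set.Icc (0:ℝ) 1, X t.1 ω) = x} = 0)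
    (hpos : 0 < P {ω | a < X 0 ω}) :
    Tendsto (fun T => ⨆ x : ℝ, (P {ω | (⨆ t : Set.Icc (0:ℝ) T, X t.1 ω) = x}).toReal)
      atTop (nhds 0) := by
  -- basic facts about suprema
  have hXshift : ∀ (s c : ℝ) ω, X (s + c) ω = X s (φ c ω) := by
    intro s c ω
    rw [hX (s + c) ω, hflow s c, hX s (φ c ω)]
    rfl
  have hbddr : ∀ ω (c d : ℝ), BddAbove (Set.range fun t : Icc c d => X t.1 ω) := by
    intro ω c d
    have h := usc_bddAbove (husc ω) (isCompact_Icc (a := c) (b := d))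
    rw [Set.image_eq_range] at h
    exact h
  have hle_sup : ∀ ω (c d t : ℝ), t ∈ Icc c d → X t ω ≤ ⨆ t : Icc c d, X t.1 ω := by
    intro ω c d t ht
    exact le_ciSup (hbddr ω c d) (⟨t, ht⟩ : Icc c d)
  have hsup_mono : ∀ ω (c d c' d' : ℝ), c' ≤ c → d ≤ d' → c ≤ d →
      (⨆ t : Icc c d, X t.1 ω) ≤ ⨆ t : Icc c' d', X t.1 ω := by
    intro ω c d c' d' hc hd hcd
    haveI : Nonempty (Icc c d) := Set.Nonempty.to_subtype (Set.nonempty_Icc.mpr hcd)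
    exact ciSup_le fun t => hle_sup ω c' d' t.1 ⟨hc.trans t.2.1, t.2.2.trans hd⟩
  -- stationarity for the sup over unit intervals
  have hshift : ∀ (c : ℝ) ω, (⨆ t : Icc c (c + 1), X t.1 ω)
      = ⨆ s : Icc (0:ℝ) 1, X s.1 (φ c ω) := by
    intro c ω
    rw [← sSup_range, ← sSup_range]
    congr 1
    ext y
    constructor
    · rintro ⟨⟨t, ht⟩, rfl⟩
      refine ⟨⟨t - c, ⟨by simp [ht.1], by have := ht.2; simp; linarith⟩⟩, ?_⟩
      simp only
      rw [← hXshift (t - c) c ω, sub_add_cancel]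
    · rintro ⟨⟨s, hs⟩, rfl⟩
      refine ⟨⟨s + c, ⟨by linarith [hs.1], by linarith [hs.2]⟩⟩, ?_⟩
      simp only
      rw [hXshift s c ω]
  -- key: no atoms above a, for T ≥ 1
  have hzero : ∀ T : ℝ, 1 ≤ T → ∀ x, a < x →
      P {ω | (⨆ t : Icc (0:ℝ) T, X t.1 ω) = x} = 0 := by
    intro T hT x hx
    set n := ⌈T⌉₊ with hn
    have hTn : T ≤ (n : ℝ) := Nat.le_ceil T
    have hn1 : 1 ≤ n := by
      rw [hn]
      exact Nat.one_le_ceil_iff.mpr (by linarith)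
    set c : ℕ → ℝ := fun j => min (j : ℝ) (T - 1) with hc
    have hc0 : ∀ j, 0 ≤ c j := fun j => le_min (Nat.cast_nonneg j) (by linarith)
    have hc1 : ∀ j, c j + 1 ≤ T := fun j => by
      have := min_le_right (j : ℝ) (T - 1); simp only [hc]; linarith
    have hsub : {ω | (⨆ t : Icc (0:ℝ) T, X t.1 ω) = x}
        ⊆ ⋃ j ∈ Finset.range n, {ω | (⨆ t : Icc (c j) (c j + 1), X t.1 ω) = x} := by
      intro ω hω
      simp only [Set.mem_setOf_eq] at hω
      have hMle : ∀ j, (⨆ t : Icc (c j) (c j + 1), X t.1 ω) ≤ x := by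
        intro j
        rw [← hω]
        exact hsup_mono ω (c j) (c j + 1) 0 T (hc0 j) (hc1 j) (by linarith)
      have hne : (Finset.range n).Nonempty := ⟨0, Finset.mem_range.mpr (by omega)⟩
      have hxle : x ≤ (Finset.range n).sup' hne
          (fun j => ⨆ t : Icc (c j) (c j + 1), X t.1 ω) := by
        rw [← hω]
        haveI : Nonempty (Icc (0:ℝ) T) :=
          Set.Nonempty.to_subtype (Set.nonempty_Icc.mpr (by linarith))
        refine ciSup_le fun t => ?_
        obtain ⟨t, ht⟩ := t
        by_cases h : t ≤ T - 1
        · set j := ⌊t⌋₊ with hj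
          have hjt : (j : ℝ) ≤ t := Nat.floor_le ht.1
          have hjn : j ∈ Finset.range n := by
            rw [Finset.mem_range]
            have : (j : ℝ) < (n : ℝ) := lt_of_le_of_lt (hjt.trans h) (by linarith)
            exact_mod_cast this
          have hcj : c j = (j : ℝ) := min_eq_left (hjt.trans h)
          refine le_trans (hle_sup ω (c j) (c j + 1) t
            ⟨by rw [hcj]; exact hjt, by rw [hcj]; exact le_of_lt (Nat.lt_floor_add_one t)⟩)
            (Finset.le_sup' (f := fun j => ⨆ t : Icc (c j) (c j + 1), X t.1 ω) hjn)
        · push_neg at h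
          have hjn : n - 1 ∈ Finset.range n := Finset.mem_range.mpr (by omega)
          have hcj : c (n - 1) = T - 1 := by
            refine min_eq_right ?_
            have : (1:ℝ) ≤ (n:ℝ) := by exact_mod_cast hn1
            have hcast : ((n - 1 : ℕ) : ℝ) = (n : ℝ) - 1 := by
              have : (1:ℕ) ≤ n := hn1
              push_cast [this]; ring
            rw [hcast]; linarith
          refine le_trans (hle_sup ω (c (n-1)) (c (n-1) + 1) t
            ⟨by rw [hcj]; linarith, by rw [hcj]; linarith [ht.2]⟩)
            (Finset.le_sup' (f := fun j => ⨆ t : Icc (c j) (c j + 1), X t.1 ω) hjn)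
      obtain ⟨j, hjmem, hjeq⟩ := Finset.exists_mem_eq_sup' hne
        (fun j => ⨆ t : Icc (c j) (c j + 1), X t.1 ω)
      have : (⨆ t : Icc (c j) (c j + 1), X t.1 ω) = x :=
        le_antisymm (hMle j) (hjeq ▸ hxle)
      exact Set.mem_biUnion hjmem this
    have hpiece : ∀ j : ℕ, P {ω | (⨆ t : Icc (c j) (c j + 1), X t.1 ω) = x} = 0 := by
      intro j
      have : {ω | (⨆ t : Icc (c j) (c j + 1), X t.1 ω) = x}
          = φ (c j) ⁻¹' {ω | (⨆ s : Icc (0:ℝ) 1, X s.1 ω) = x} := by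
        ext ω
        simp only [Set.mem_setOf_eq, Set.mem_preimage, hshift (c j) ω]
      have hms : MeasurableSet {ω | (⨆ s : Icc (0:ℝ) 1, X s.1 ω) = x} :=
        (hmeas_sup 0 1) (measurableSet_singleton x)
      rw [this, (hmp (c j)).measure_preimage hms.nullMeasurableSet, hatom x hx]
    refine le_antisymm ?_ zero_le
    refine le_trans (measure_mono hsub) ?_
    refine le_trans (measure_biUnion_finset_le _ _) ?_
    simp [hpiece]
  -- the events B n = {sup over [0,n] ≤ a}
  set B : ℕ → Set Ω := fun n => {ω | (⨆ t : Icc (0:ℝ) (n:ℝ), X t.1 ω) ≤ a} with hB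
  have hBmeas : ∀ n, MeasurableSet (B n) := fun n =>
    (hmeas_sup 0 (n : ℝ)) measurableSet_Iic
  have hBanti : Antitone B := by
    intro m n hmn ω hω
    simp only [hB, Set.mem_setOf_eq] at hω ⊢
    exact le_trans (hsup_mono ω 0 (m:ℝ) 0 (n:ℝ) le_rfl (by exact_mod_cast hmn)
      (Nat.cast_nonneg m)) hω
  have hBinf : (⋂ n, B n) = {ω | ∀ t, 0 ≤ t → X t ω ≤ a} := by
    ext ω
    simp only [Set.mem_iInter, hB, Set.mem_setOf_eq]
    constructor
    · intro h t ht
      obtain ⟨n, hn⟩ := exists_nat_ge t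
      exact le_trans (hle_sup ω 0 (n:ℝ) t ⟨ht, hn⟩) (h n)
    · intro h n
      haveI : Nonempty (Icc (0:ℝ) (n:ℝ)) :=
        Set.Nonempty.to_subtype (Set.nonempty_Icc.mpr (Nat.cast_nonneg n))
      exact ciSup_le fun t => h t.1 t.2.1
  -- the intersection is invariant, hence has measure 0 or 1; it cannot be 1
  have hpre : ∀ s : ℝ, φ s ⁻¹' (⋂ n, B n) = {ω | ∀ u, s ≤ u → X u ω ≤ a} := by
    intro s
    ext ω
    rw [Set.mem_preimage, hBinf]
    simp only [Set.mem_setOf_eq]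
    constructor
    · intro h u hu
      have := h (u - s) (by linarith)
      rwa [← hXshift (u - s) s ω, sub_add_cancel] at this
    · intro h t ht
      rw [← hXshift t s ω]
      exact h (t + s) (by linarith)
  have hBinfmeas : MeasurableSet (⋂ n, B n) := MeasurableSet.iInter hBmeas
  have hB01 : P (⋂ n, B n) = 0 ∨ P (⋂ n, B n) = 1 := by
    refine herg _ hBinfmeas fun s => ?_
    have hmeq : P (φ s ⁻¹' ⋂ n, B n) = P (⋂ n, B n) :=
      (hmp s).measure_preimage hBinfmeas.nullMeasurableSet
    rcases le_or_gt 0 s with hs | hs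
    · have hsub2 : (⋂ n, B n) ⊆ φ s ⁻¹' ⋂ n, B n := by
        rw [hpre s, hBinf]
        intro ω hω u hu
        exact hω u (by linarith)
      rw [symmDiff_comm]
      exact symmDiff_measure_zero P hsub2 hBinfmeas hmeq.symm
    · have hsub2 : (φ s ⁻¹' ⋂ n, B n) ⊆ ⋂ n, B n := by
        rw [hpre s, hBinf]
        intro ω hω u hu
        exact hω u (by linarith)
      exact symmDiff_measure_zero P hsub2 ((hmp s).measurable hBinfmeas) hmeq
  have hBinf0 : P (⋂ n, B n) = 0 := by
    rcases hB01 with h | h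
    · exact h
    · exfalso
      have hsub3 : {ω | a < X 0 ω} ⊆ (⋂ n, B n)ᶜ := by
        intro ω hω hmem
        rw [hBinf] at hmem
        exact absurd (hmem 0 le_rfl) (not_le.mpr hω)
      have : P ((⋂ n, B n)ᶜ) = 0 := by
        rw [prob_compl_eq_one_sub hBinfmeas, h, tsub_self]
      exact absurd (le_antisymm (le_trans (measure_mono hsub3) this.le) zero_le)
        (ne_of_gt hpos)
  have htendB : Tendsto (fun n => P (B n)) atTop (𝓝 0) := by
    have := tendsto_measure_iInter_atTop (fun n => (hBmeas n).nullMeasurableSet) hBanti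
      ⟨0, measure_ne_top P _⟩
    rwa [hBinf0] at this
  -- squeeze
  have htendh : Tendsto (fun T : ℝ => (P (B ⌊T⌋₊)).toReal) atTop (𝓝 0) := by
    have h1 : Tendsto (fun T : ℝ => P (B ⌊T⌋₊)) atTop (𝓝 0) :=
      htendB.comp tendsto_nat_floor_atTop
    have := (ENNReal.tendsto_toReal ENNReal.zero_ne_top).comp h1
    simpa [Function.comp_def] using this
  refine tendsto_of_tendsto_of_tendsto_of_le_of_le' tendsto_const_nhds htendh ?_ ?_
  · exact Eventually.of_forall fun T => Real.iSup_nonneg fun x => ENNReal.toReal_nonneg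
  · filter_upwards [eventually_ge_atTop (1:ℝ)] with T hT
    refine Real.iSup_le (fun x => ?_) ENNReal.toReal_nonneg
    rcases le_or_gt x a with hxa | hxa
    · refine ENNReal.toReal_mono (measure_ne_top P _) (measure_mono ?_)
      intro ω hω
      simp only [Set.mem_setOf_eq] at hω
      simp only [hB, Set.mem_setOf_eq]
      refine le_trans (hsup_mono ω 0 ((⌊T⌋₊ : ℕ) : ℝ) 0 T le_rfl
        (Nat.floor_le (by linarith)) (Nat.cast_nonneg _)) ?_
      rw [hω]; exact hxa
    · rw [hzero T hT x hxa]
      simp
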